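/- Let $X$ be the uniform distribution on the set $S = \{\pm I_2, \pm\begin{pmatrix}1&1\\0&1\end{pmatrix}, \pm\begin{pmatrix}1&-1\\0&1\end{pmatrix}, \pm\begin{pmatrix}0&1\\-1&0\end{pmatrix}\}$, let $X_1, X_2, \dots$ be i.i.d. copies of $X$, and set $a_n = \mathbb{E}[\|X_1\cdots X_n\|_{HS}^2]$. Then $a_n = \frac{3+\sqrt{3}}{6}(1+\sqrt{3})\left(\frac{3+\sqrt{3}}{4}\right)^n + \frac{-3+\sqrt{3}}{6}(-1+\sqrt{3})\left(\frac{3-\sqrt{3}}{4}\right)^n$ for all $n \ge 0$. -/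

import Mathlib

open Matrix MeasureTheory ProbabilityTheory

instance matMSR {d : ℕ} : MeasurableSpace (Matrix (Fin d) (Fin d) ℝ) :=
  MeasurableSpace.pi

/-- The eight matrices `±I₂, ±[[1,1],[0,1]], ±[[1,-1],[0,1]], ±[[0,1],[-1,0]]`. -/
noncomputable def exS : Fin 8 → Matrix (Fin 2) (Fin 2) ℝ :=
  ![!![1, 0; 0, 1], -!![1, 0; 0, 1],
    !![1, 1; 0, 1], -!![1, 1; 0, 1],
    !![1, -1; 0, 1], -!![1, -1; 0, 1],
    !![0, 1; -1, 0], -!![0, 1; -1, 0]]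

instance matMSC {d : ℕ} : MeasurableSingletonClass (Matrix (Fin d) (Fin d) ℝ) :=
  Pi.instMeasurableSingletonClass

lemma meas_entry {α} [MeasurableSpace α] {f : α → Matrix (Fin 2) (Fin 2) ℝ}
    (hf : Measurable f) (i j : Fin 2) : Measurable fun a => f a i j :=
  (measurable_pi_apply j).comp ((measurable_pi_apply i).comp hf)

lemma meas_mul {α} [MeasurableSpace α] {f g : α → Matrix (Fin 2) (Fin 2) ℝ}
    (hf : Measurable f) (hg : Measurable g) : Measurable fun a => f a * g a := by
  apply measurable_pi_lambda; intro i; apply measurable_pi_lambda; intro j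
  simp only [Matrix.mul_apply]
  exact Finset.measurable_sum _ fun k _ => (meas_entry hf i k).mul (meas_entry hg k j)

lemma meas_listprod {α} [MeasurableSpace α] (L : List (α → Matrix (Fin 2) (Fin 2) ℝ))
    (h : ∀ f ∈ L, Measurable f) : Measurable fun a => (L.map (fun f => f a)).prod := by
  induction L with
  | nil => simpa using measurable_const
  | cons f L ih =>
      simp only [List.map_cons, List.prod_cons]
      exact meas_mul (h f (by simp)) (ih fun g hg => h g (by simp [hg]))

lemma exS_bound (s : Fin 8) (k l : Fin 2) : |exS s k l| ≤ 1 := by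
  fin_cases s <;> fin_cases k <;> fin_cases l <;> norm_num [exS]

noncomputable def dd (n : ℕ) : ℝ :=
  (3 + Real.sqrt 3)/6 * ((3 + Real.sqrt 3)/4)^n + (3 - Real.sqrt 3)/6 * ((3 - Real.sqrt 3)/4)^n
noncomputable def ee (n : ℕ) : ℝ :=
  Real.sqrt 3 * ((3 + Real.sqrt 3)/6 * ((3 + Real.sqrt 3)/4)^n
    - (3 - Real.sqrt 3)/6 * ((3 - Real.sqrt 3)/4)^n)

lemma sqrt3_sq : Real.sqrt 3 * Real.sqrt 3 = 3 := Real.mul_self_sqrt (by norm_num)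

lemma dd_zero : dd 0 = 1 := by simp [dd]; ring
lemma ee_zero : ee 0 = 1 := by
  have h := sqrt3_sq; simp [ee]; nlinarith [h]
lemma dd_succ (n : ℕ) : dd (n+1) = (3 * dd n + ee n)/4 := by
  simp only [dd, ee, pow_succ]; ring
lemma ee_succ (n : ℕ) : ee (n+1) = (3 * dd n + 3 * ee n)/4 := by
  have h := sqrt3_sq; simp only [dd, ee, pow_succ]
  linear_combination (1/24) * ((Real.sqrt 3 + 3) * ((3 + Real.sqrt 3)/4)^n
    - (Real.sqrt 3 - 3) * ((3 - Real.sqrt 3)/4)^n) * h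

/-- If `X₁, X₂, …` are i.i.d. uniform on the set `exS` of eight matrices, then
`aₙ = E‖X₁ ⋯ Xₙ‖²_{HS}` is given exactly by
`((3+√3)/6)(1+√3)((3+√3)/4)ⁿ + ((-3+√3)/6)(-1+√3)((3-√3)/4)ⁿ`. -/
theorem stmt9 {Ω : Type*} [MeasurableSpace Ω] (μ : Measure Ω) [IsProbabilityMeasure μ]
    (X : ℕ → Ω → Matrix (Fin 2) (Fin 2) ℝ)
    (hmeas : ∀ n, Measurable (X n))
    (hindep : iIndepFun X μ)
    (hlaw : ∀ n, μ.map (X n) = (8 : ENNReal)⁻¹ • ∑ i : Fin 8, Measure.dirac (exS i)) :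
    ∀ n : ℕ,
      (∫ ω, Matrix.trace ((((List.range n).map fun i => X i ω).prod)ᵀ *
          ((List.range n).map fun i => X i ω).prod) ∂μ) =
        (3 + Real.sqrt 3) / 6 * (1 + Real.sqrt 3) * ((3 + Real.sqrt 3) / 4) ^ n +
        (-3 + Real.sqrt 3) / 6 * (-1 + Real.sqrt 3) * ((3 - Real.sqrt 3) / 4) ^ n := by
  classical
  set P : ℕ → Ω → Matrix (Fin 2) (Fin 2) ℝ :=
    fun n ω => ((List.range n).map fun i => X i ω).prod with hP
  have hPfin : ∀ n ω, P n ω = ((List.finRange n).map fun i : Fin n => X i.1 ω).prod := by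
    intro n ω
    rw [hP]
    simp only [← (show (List.finRange n).map (fun i : Fin n => (i : ℕ)) = List.range n from
      List.ext_getElem (by simp) (by simp)), List.map_map]
    rfl
  have hPmeas : ∀ n, Measurable (P n) := by
    intro n
    have h1 : P n = fun ω => ((((List.finRange n).map fun i : Fin n => fun ω => X i.1 ω)).map
        (fun f => f ω)).prod := by
      funext ω; rw [hPfin]; simp [List.map_map]; rfl
    rw [h1]
    apply meas_listprod
    intro f hf
    simp only [List.mem_map] at hf
    obtain ⟨i, _, rfl⟩ := hf
    exact hmeas i.1
  have hPsucc : ∀ n ω, P (n+1) ω = P n ω * X n ω := by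
    intro n ω; simp [hP, List.range_succ]
  -- a.e. membership in the support
  have h_ae : ∀ᵐ ω ∂μ, ∀ i, X i ω ∈ Set.range exS := by
    rw [ae_all_iff]
    intro i
    have hS : MeasurableSet (Set.range exS : Set (Matrix (Fin 2) (Fin 2) ℝ)) :=
      (Set.finite_range exS).measurableSet
    rw [ae_iff]
    have hpre : {ω | ¬ X i ω ∈ Set.range exS} = (X i) ⁻¹' (Set.range exS)ᶜ := rfl
    rw [hpre, ← Measure.map_apply (hmeas i) hS.compl, hlaw i]
    simp only [Measure.smul_apply, Measure.coe_finset_sum, Finset.sum_apply, smul_eq_mul]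
    have : ∀ s : Fin 8, Measure.dirac (exS s) (Set.range exS)ᶜ = 0 := by
      intro s
      rw [Measure.dirac_apply' _ hS.compl]
      simp [Set.indicator_of_notMem, Set.mem_range]
    simp [this]
  -- a.e. entry bounds
  have hXb : ∀ᵐ ω ∂μ, ∀ i (k l : Fin 2), |X i ω k l| ≤ 1 := by
    filter_upwards [h_ae] with ω h i k l
    obtain ⟨s, hs⟩ := h i
    rw [← hs]; exact exS_bound s k l
  have hPb : ∀ᵐ ω ∂μ, ∀ n (k l : Fin 2), |P n ω k l| ≤ 2 ^ n := by
    filter_upwards [hXb] with ω hX n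
    induction n with
    | zero =>
        intro k l
        simp only [hP, List.range_zero, List.map_nil, List.prod_nil, pow_zero]
        rcases eq_or_ne k l with h | h <;> simp [Matrix.one_apply, h]
    | succ n ih =>
        intro k l
        rw [hPsucc]
        rw [Matrix.mul_apply]
        calc |∑ m, P n ω k m * X n ω m l| ≤ ∑ m, |P n ω k m * X n ω m l| :=
              Finset.abs_sum_le_sum_abs _ _
          _ ≤ ∑ _m : Fin 2, (2:ℝ)^n * 1 := by
              apply Finset.sum_le_sum
              intro m _
              rw [abs_mul]
              exact mul_le_mul (ih k m) (hX n m l) (abs_nonneg _) (by positivity)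
          _ = 2 ^ (n+1) := by simp [Fin.sum_univ_two]; ring
  have hGb : ∀ᵐ ω ∂μ, ∀ n (k l : Fin 2), |((P n ω)ᵀ * P n ω) k l| ≤ 2 * 4 ^ n := by
    filter_upwards [hPb] with ω h n k l
    rw [Matrix.mul_apply]
    calc |∑ m, (P n ω)ᵀ k m * P n ω m l| ≤ ∑ m, |(P n ω)ᵀ k m * P n ω m l| :=
          Finset.abs_sum_le_sum_abs _ _
      _ ≤ ∑ _m : Fin 2, (2:ℝ)^n * 2^n := by
          apply Finset.sum_le_sum
          intro m _
          rw [abs_mul, Matrix.transpose_apply]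
          exact mul_le_mul (h n m k) (h n m l) (abs_nonneg _) (by positivity)
      _ = 2 * 4 ^ n := by
          simp [Fin.sum_univ_two]
          rw [← mul_pow]; ring_nf
  -- measurability and integrability of Gram entries
  have hGmeas : ∀ n (k l : Fin 2), Measurable fun ω => ((P n ω)ᵀ * P n ω) k l := by
    intro n k l
    have ht : Measurable fun ω => (P n ω)ᵀ := by
      apply measurable_pi_lambda; intro i; apply measurable_pi_lambda; intro j
      exact meas_entry (hPmeas n) j i
    exact meas_entry (meas_mul ht (hPmeas n)) k l
  have hGint : ∀ n (k l : Fin 2), Integrable (fun ω => ((P n ω)ᵀ * P n ω) k l) μ := by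
    intro n k l
    apply Integrable.mono' (integrable_const ((2:ℝ) * 4 ^ n))
      (hGmeas n k l).aestronglyMeasurable
    filter_upwards [hGb] with ω h
    simpa [Real.norm_eq_abs] using h n k l
  have hXint : ∀ n (k i l j : Fin 2), Integrable (fun ω => X n ω k i * X n ω l j) μ := by
    intro n k i l j
    apply Integrable.mono' (integrable_const (1:ℝ))
      ((meas_entry (hmeas n) k i).mul (meas_entry (hmeas n) l j)).aestronglyMeasurable
    filter_upwards [hXb] with ω h
    simp only [Real.norm_eq_abs, Pi.mul_apply, abs_mul]
    exact mul_le_one₀ (h n k i) (abs_nonneg _) (h n l j)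
  -- independence
  have hIndep : ∀ n (k l i j : Fin 2),
      IndepFun (fun ω => ((P n ω)ᵀ * P n ω) k l) (fun ω => X n ω k i * X n ω l j) μ := by
    intro n k l i j
    have h1 : IndepFun (fun ω (p : (Finset.range n : Finset ℕ)) => X p ω)
        (fun ω (p : ({n} : Finset ℕ)) => X p ω) μ :=
      hindep.indepFun_finset (Finset.range n) {n} (by simp) hmeas
    set Q : ((p : (Finset.range n : Finset ℕ)) → Matrix (Fin 2) (Fin 2) ℝ) →
        Matrix (Fin 2) (Fin 2) ℝ :=
      fun v => ((List.finRange n).map fun i : Fin n =>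
        v ⟨i.1, Finset.mem_range.mpr i.2⟩).prod with hQ
    have hQmeas : Measurable Q := by
      have h2 : Q = fun v => ((((List.finRange n).map fun i : Fin n =>
          (fun v' : (p : (Finset.range n : Finset ℕ)) → Matrix (Fin 2) (Fin 2) ℝ =>
            v' ⟨i.1, Finset.mem_range.mpr i.2⟩))).map (fun f => f v)).prod := by
        funext v; rw [hQ]; simp [List.map_map]; rfl
      rw [h2]
      apply meas_listprod
      intro f hf
      simp only [List.mem_map] at hf
      obtain ⟨i, _, rfl⟩ := hf
      exact measurable_pi_apply _
    set F : ((p : (Finset.range n : Finset ℕ)) → Matrix (Fin 2) (Fin 2) ℝ) → ℝ :=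
      fun v => ((Q v)ᵀ * Q v) k l with hF
    have hFmeas : Measurable F := by
      have ht : Measurable fun v => (Q v)ᵀ := by
        apply measurable_pi_lambda; intro a; apply measurable_pi_lambda; intro b
        exact meas_entry hQmeas b a
      exact meas_entry (meas_mul ht hQmeas) k l
    set g : ((p : ({n} : Finset ℕ)) → Matrix (Fin 2) (Fin 2) ℝ) → ℝ :=
      fun v => v ⟨n, Finset.mem_singleton_self n⟩ k i * v ⟨n, Finset.mem_singleton_self n⟩ l j
      with hg
    have hgmeas : Measurable g := by
      apply Measurable.mul <;>
        exact meas_entry (measurable_pi_apply _) _ _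
    have h2 := h1.comp hFmeas hgmeas
    have e1 : (F ∘ fun ω (p : (Finset.range n : Finset ℕ)) => X p ω)
        = fun ω => ((P n ω)ᵀ * P n ω) k l := by
      funext ω
      simp only [Function.comp, hF, hQ, hPfin]
    have e2 : (g ∘ fun ω (p : ({n} : Finset ℕ)) => X p ω)
        = fun ω => X n ω k i * X n ω l j := by
      funext ω; simp [hg]
    rwa [e1, e2] at h2
  -- moments of X n
  have hXmom : ∀ n (k i l j : Fin 2), ∫ ω, X n ω k i * X n ω l j ∂μ
      = (8:ℝ)⁻¹ * ∑ s : Fin 8, exS s k i * exS s l j := by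
    intro n k i l j
    have hf : Measurable fun M : Matrix (Fin 2) (Fin 2) ℝ => M k i * M l j :=
      (meas_entry measurable_id k i).mul (meas_entry measurable_id l j)
    have h1 : (∫ ω, X n ω k i * X n ω l j ∂μ)
        = ∫ M, M k i * M l j ∂(μ.map (X n)) :=
      (integral_map (hmeas n).aemeasurable
        (hf.aestronglyMeasurable (μ := μ.map (X n)))).symm
    rw [h1, hlaw n, integral_smul_measure,
      integral_finset_sum_measure (fun s _ => (integrable_const _).congr
        (MeasureTheory.ae_eq_dirac (fun M : Matrix (Fin 2) (Fin 2) ℝ => M k i * M l j)).symm)]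
    simp only [integral_dirac, smul_eq_mul]
    congr 1
    simp [ENNReal.toReal_inv]
  -- one-step recursion
  have hstep : ∀ n (i j : Fin 2), (∫ ω, ((P (n+1) ω)ᵀ * P (n+1) ω) i j ∂μ)
      = ∑ k : Fin 2, ∑ l : Fin 2, (∫ ω, ((P n ω)ᵀ * P n ω) k l ∂μ)
          * ((8:ℝ)⁻¹ * ∑ s : Fin 8, exS s k i * exS s l j) := by
    intro n i j
    have hexp : ∀ ω, ((P (n+1) ω)ᵀ * P (n+1) ω) i j
        = ∑ k : Fin 2, ∑ l : Fin 2,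
            ((P n ω)ᵀ * P n ω) k l * (X n ω k i * X n ω l j) := by
      intro ω
      rw [hPsucc]
      simp only [Matrix.transpose_mul, Matrix.mul_apply, Matrix.transpose_apply,
        Fin.sum_univ_two]
      ring
    have hint : ∀ (k l : Fin 2),
        Integrable (fun ω => ((P n ω)ᵀ * P n ω) k l * (X n ω k i * X n ω l j)) μ :=
      fun k l => (hIndep n k l i j).integrable_mul (hGint n k l) (hXint n k i l j)
    simp_rw [hexp]
    rw [integral_finset_sum _ (fun k _ => integrable_finset_sum _ (fun l _ => hint k l))]
    refine Finset.sum_congr rfl fun k _ => ?_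
    rw [integral_finset_sum _ (fun l _ => hint k l)]
    refine Finset.sum_congr rfl fun l _ => ?_
    have h2 : (∫ a, ((P n a)ᵀ * P n a) k l * (X n a k i * X n a l j) ∂μ)
        = (∫ ω, ((P n ω)ᵀ * P n ω) k l ∂μ) * ∫ ω, X n ω k i * X n ω l j ∂μ :=
      (hIndep n k l i j).integral_mul_eq_mul_integral (hGint n k l).aestronglyMeasurable
        (hXint n k i l j).aestronglyMeasurable
    rw [h2, hXmom n k i l j]
  -- the main induction
  have key : ∀ n, (∫ ω, ((P n ω)ᵀ * P n ω) 0 0 ∂μ) = dd n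
      ∧ (∫ ω, ((P n ω)ᵀ * P n ω) 0 1 ∂μ) = 0
      ∧ (∫ ω, ((P n ω)ᵀ * P n ω) 1 0 ∂μ) = 0
      ∧ (∫ ω, ((P n ω)ᵀ * P n ω) 1 1 ∂μ) = ee n := by
    intro n
    induction n with
    | zero =>
        have h0 : ∀ ω, P 0 ω = (1 : Matrix (Fin 2) (Fin 2) ℝ) := by
          intro ω; simp [hP]
        simp only [h0]
        rw [Matrix.transpose_one, Matrix.one_mul]
        simp [Matrix.one_apply, dd_zero, ee_zero]
    | succ n ih =>
        obtain ⟨i00, i01, i10, i11⟩ := ih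
        refine ⟨?_, ?_, ?_, ?_⟩ <;>
        · rw [hstep]
          simp only [Fin.sum_univ_two, i00, i01, i10, i11]
          norm_num [exS, Fin.sum_univ_succ, dd_succ, ee_succ]
          try ring
  -- conclude
  intro n
  obtain ⟨h00, _, _, h11⟩ := key n
  have htr : ∀ ω, Matrix.trace ((P n ω)ᵀ * P n ω)
      = ((P n ω)ᵀ * P n ω) 0 0 + ((P n ω)ᵀ * P n ω) 1 1 := by
    intro ω; simp [Matrix.trace, Fin.sum_univ_two, Matrix.diag]
  calc (∫ ω, Matrix.trace ((P n ω)ᵀ * P n ω) ∂μ)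
      = ∫ ω, (((P n ω)ᵀ * P n ω) 0 0 + ((P n ω)ᵀ * P n ω) 1 1) ∂μ := by
        simp_rw [htr]
    _ = (∫ ω, ((P n ω)ᵀ * P n ω) 0 0 ∂μ) + ∫ ω, ((P n ω)ᵀ * P n ω) 1 1 ∂μ :=
        integral_add (hGint n 0 0) (hGint n 1 1)
    _ = dd n + ee n := by rw [h00, h11]
    _ = (3 + Real.sqrt 3) / 6 * (1 + Real.sqrt 3) * ((3 + Real.sqrt 3) / 4) ^ n +
        (-3 + Real.sqrt 3) / 6 * (-1 + Real.sqrt 3) * ((3 - Real.sqrt 3) / 4) ^ n := by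
      simp only [dd, ee]
      ring
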